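/- In the type A construction, each X_t is marginally Poisson with mean μ. -/

import Mathlib

open MeasureTheory Finset

/-- Poisson probability mass function with mean `μ`. -/
noncomputable def poissonPmf (μ : ℝ) (k : ℕ) : ℝ :=
  Real.exp (-μ) * μ ^ k / (Nat.factorial k : ℝ)

/-- Binomial probability mass function with `n` trials and success probability `α`. -/
def binomPmf (n : ℕ) (α : ℝ) (k : ℕ) : ℝ :=
  (n.choose k : ℝ) * α ^ k * (1 - α) ^ (n - k)

lemma poissonPmf_nonneg {μ : ℝ} (hμ : 0 ≤ μ) (k : ℕ) : 0 ≤ poissonPmf μ k := by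
  unfold poissonPmf; positivity

lemma binomPmf_nonneg {a : ℝ} (h0 : 0 ≤ a) (h1 : a ≤ 1) (n k : ℕ) : 0 ≤ binomPmf n a k := by
  unfold binomPmf
  have : 0 ≤ 1 - a := by linarith
  positivity

lemma hasSum_exp_series (x : ℝ) : HasSum (fun n : ℕ => x ^ n / n.factorial) (Real.exp x) := by
  rw [Real.exp_eq_exp_ℝ]
  exact NormedSpace.expSeries_div_hasSum_exp x

lemma hasSum_thinning (m a : ℝ) (y : ℕ) :
    HasSum (fun w : ℕ => poissonPmf m w * binomPmf w a y) (poissonPmf (m * a) y) := by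
  have hinj : Function.Injective (fun j : ℕ => j + y) := add_left_injective y
  rw [← Function.Injective.hasSum_iff hinj (by
    rintro w hw
    have hwy : w < y := by
      by_contra h
      exact hw ⟨w - y, by simp; omega⟩
    have : w.choose y = 0 := Nat.choose_eq_zero_of_lt hwy
    simp [binomPmf, this])]
  have key : ∀ j : ℕ, poissonPmf m (j + y) * binomPmf (j + y) a y
      = (Real.exp (-m) * (m * a) ^ y / y.factorial) * ((m * (1 - a)) ^ j / j.factorial) := by
    intro j
    unfold poissonPmf binomPmf
    have hsub : j + y - y = j := by omega
    have hch : ((j + y).choose y : ℝ) = ((j + y).factorial : ℝ) / (y.factorial * j.factorial) := by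
      rw [Nat.cast_choose ℝ (Nat.le_add_left y j), hsub]
    rw [hch, hsub, mul_pow m (1 - a) j, mul_pow m a y, pow_add m j y]
    have hf1 : ((j + y).factorial : ℝ) ≠ 0 := Nat.cast_ne_zero.2 (Nat.factorial_ne_zero _)
    have hf2 : (y.factorial : ℝ) ≠ 0 := Nat.cast_ne_zero.2 (Nat.factorial_ne_zero _)
    have hf3 : (j.factorial : ℝ) ≠ 0 := Nat.cast_ne_zero.2 (Nat.factorial_ne_zero _)
    field_simp
  simp only [Function.comp_def]
  simp_rw [key]
  have := (hasSum_exp_series (m * (1 - a))).mul_left (Real.exp (-m) * (m * a) ^ y / y.factorial)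
  convert this using 2
  · rfl
  unfold poissonPmf
  rw [show (-(m * a)) = m * (1 - a) + -m by ring, Real.exp_add]
  ring

lemma poisson_conv (a b : ℝ) (n : ℕ) :
    ∑ k ∈ range (n + 1), poissonPmf a k * poissonPmf b (n - k) = poissonPmf (a + b) n := by
  unfold poissonPmf
  rw [show -(a + b) = -a + -b by ring, Real.exp_add, add_pow]
  rw [Finset.mul_sum, Finset.sum_div]
  refine Finset.sum_congr rfl fun k hk => ?_
  have hkn : k ≤ n := Nat.lt_succ_iff.mp (Finset.mem_range.mp hk)
  have hfac : (n.choose k : ℝ) * ((k.factorial : ℝ) * ((n - k).factorial : ℝ)) = (n.factorial : ℝ) := by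
    rw [← mul_assoc, ← Nat.cast_mul, ← Nat.cast_mul]
    exact_mod_cast congrArg (Nat.cast : ℕ → ℝ) (Nat.choose_mul_factorial_mul_factorial hkn)
  have hf1 : (n.factorial : ℝ) ≠ 0 := Nat.cast_ne_zero.2 (Nat.factorial_ne_zero _)
  have hf2 : (k.factorial : ℝ) ≠ 0 := Nat.cast_ne_zero.2 (Nat.factorial_ne_zero _)
  have hf3 : ((n - k).factorial : ℝ) ≠ 0 := Nat.cast_ne_zero.2 (Nat.factorial_ne_zero _)
  field_simp
  linear_combination (-(a ^ k * b ^ (n - k))) * hfac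

def splitEquiv (k : ℕ) : ((Fin (k + 1) → ℕ × ℕ) × ℕ) ≃ ((ℕ × ℕ) × ((Fin k → ℕ × ℕ) × ℕ)) where
  toFun x := (x.1 0, (fun i => x.1 i.succ, x.2))
  invFun q := (Fin.cons q.1 q.2.1, q.2.2)
  left_inv x := by
    refine Prod.ext ?_ rfl
    exact Fin.cons_self_tail x.1
  right_inv q := by simp

lemma key_conv (μ d : ℝ) (hμ : 0 ≤ μ) (hd : 0 ≤ d) :
    ∀ (k : ℕ) (a : Fin k → ℝ), (∀ i, 0 ≤ a i) → (∀ i, a i ≤ 1) → ∀ n : ℕ,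
    (∑' x : (Fin k → ℕ × ℕ) × ℕ,
      (if (∑ i, (x.1 i).2) + x.2 = n then
        ENNReal.ofReal ((∏ i, poissonPmf μ (x.1 i).1 * binomPmf (x.1 i).1 (a i) (x.1 i).2)
          * poissonPmf d x.2) else 0))
    = ENNReal.ofReal (poissonPmf (μ * ∑ i, a i + d) n) := by
  intro k
  induction k with
  | zero =>
    intro a ha0 ha1 n
    have hs : ∀ x : (Fin 0 → ℕ × ℕ) × ℕ,
        (if (∑ i, (x.1 i).2) + x.2 = n then
          ENNReal.ofReal ((∏ i, poissonPmf μ (x.1 i).1 * binomPmf (x.1 i).1 (a i) (x.1 i).2)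
            * poissonPmf d x.2) else 0)
        = (if x.2 = n then ENNReal.ofReal (poissonPmf d x.2) else 0) := by
      intro x; simp
    rw [tsum_congr hs, ENNReal.tsum_prod']
    rw [tsum_eq_single (default : Fin 0 → ℕ × ℕ)
      (fun v hv => absurd (Subsingleton.elim v default) hv)]
    rw [tsum_eq_single n (fun e he => if_neg he), if_pos rfl]
    simp
  | succ k ih =>
    intro a ha0 ha1 n
    set R' : ℝ := μ * ∑ i : Fin k, a (Fin.succ i) + d with hR'
    have hR'0 : 0 ≤ R' := by
      have : 0 ≤ ∑ i : Fin k, a (Fin.succ i) :=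
        Finset.sum_nonneg fun i _ => ha0 _
      positivity
    have hc0 : ∀ q : ℕ × ℕ, 0 ≤ poissonPmf μ q.1 * binomPmf q.1 (a 0) q.2 := fun q =>
      mul_nonneg (poissonPmf_nonneg hμ _) (binomPmf_nonneg (ha0 0) (ha1 0) _ _)
    rw [← Equiv.tsum_eq (splitEquiv k).symm, ENNReal.tsum_prod']
    have hsummand : ∀ (q : ℕ × ℕ) (r : (Fin k → ℕ × ℕ) × ℕ),
        (if (∑ i : Fin (k+1), (((splitEquiv k).symm (q, r)).1 i).2) + ((splitEquiv k).symm (q, r)).2 = n then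
          ENNReal.ofReal ((∏ i : Fin (k+1), poissonPmf μ (((splitEquiv k).symm (q, r)).1 i).1
            * binomPmf (((splitEquiv k).symm (q, r)).1 i).1 (a i) (((splitEquiv k).symm (q, r)).1 i).2)
            * poissonPmf d ((splitEquiv k).symm (q, r)).2) else 0)
        = ENNReal.ofReal (poissonPmf μ q.1 * binomPmf q.1 (a 0) q.2) *
          (if q.2 + (∑ i : Fin k, (r.1 i).2) + r.2 = n then
            ENNReal.ofReal ((∏ i : Fin k, poissonPmf μ (r.1 i).1 *
              binomPmf (r.1 i).1 (a (Fin.succ i)) (r.1 i).2) * poissonPmf d r.2) else 0) := by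
      intro q r
      simp only [splitEquiv, Equiv.coe_fn_symm_mk]
      simp only [Fin.sum_univ_succ, Fin.prod_univ_succ]
      simp only [Fin.cons_zero, Fin.cons_succ]
      rw [mul_assoc, ENNReal.ofReal_mul (hc0 q), mul_ite, mul_zero, add_assoc]
    calc (∑' (q : ℕ × ℕ), ∑' (r : (Fin k → ℕ × ℕ) × ℕ),
        (if (∑ i : Fin (k+1), (((splitEquiv k).symm (q, r)).1 i).2) + ((splitEquiv k).symm (q, r)).2 = n then
          ENNReal.ofReal ((∏ i : Fin (k+1), poissonPmf μ (((splitEquiv k).symm (q, r)).1 i).1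
            * binomPmf (((splitEquiv k).symm (q, r)).1 i).1 (a i) (((splitEquiv k).symm (q, r)).1 i).2)
            * poissonPmf d ((splitEquiv k).symm (q, r)).2) else 0))
        = ∑' (q : ℕ × ℕ), ENNReal.ofReal (poissonPmf μ q.1 * binomPmf q.1 (a 0) q.2) *
            (if q.2 ≤ n then ENNReal.ofReal (poissonPmf R' (n - q.2)) else 0) := by
          refine tsum_congr fun q => ?_
          rw [tsum_congr (hsummand q), ENNReal.tsum_mul_left]
          congr 1
          by_cases hy : q.2 ≤ n
          · rw [if_pos hy, ← ih (fun i => a (Fin.succ i)) (fun i => ha0 _) (fun i => ha1 _) (n - q.2)]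
            exact tsum_congr fun r => if_congr (by omega) rfl rfl
          · rw [if_neg hy]
            have : ∀ r : (Fin k → ℕ × ℕ) × ℕ,
                (if q.2 + (∑ i : Fin k, (r.1 i).2) + r.2 = n then
                  ENNReal.ofReal ((∏ i : Fin k, poissonPmf μ (r.1 i).1 *
                    binomPmf (r.1 i).1 (a (Fin.succ i)) (r.1 i).2) * poissonPmf d r.2) else 0) = 0 :=
              fun r => if_neg (by omega)
            rw [tsum_congr this, tsum_zero]
      _ = ∑' (y0 : ℕ), ∑' (w0 : ℕ), ENNReal.ofReal (poissonPmf μ w0 * binomPmf w0 (a 0) y0) *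
            (if y0 ≤ n then ENNReal.ofReal (poissonPmf R' (n - y0)) else 0) := by
          rw [ENNReal.tsum_prod']
          exact ENNReal.tsum_comm
      _ = ∑' (y0 : ℕ), ENNReal.ofReal (poissonPmf (μ * a 0) y0) *
            (if y0 ≤ n then ENNReal.ofReal (poissonPmf R' (n - y0)) else 0) := by
          refine tsum_congr fun y0 => ?_
          rw [ENNReal.tsum_mul_right]
          congr 1
          rw [← ENNReal.ofReal_tsum_of_nonneg (fun w0 => hc0 (w0, y0))
            (hasSum_thinning μ (a 0) y0).summable]
          rw [(hasSum_thinning μ (a 0) y0).tsum_eq]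
      _ = ∑ y0 ∈ range (n + 1),
            ENNReal.ofReal (poissonPmf (μ * a 0) y0 * poissonPmf R' (n - y0)) := by
          rw [tsum_eq_sum (s := range (n + 1)) (fun y0 hy0 => by
            rw [if_neg (by simpa using hy0), mul_zero])]
          refine Finset.sum_congr rfl fun y0 hy0 => ?_
          rw [if_pos (Nat.lt_succ_iff.mp (Finset.mem_range.mp hy0)),
            ENNReal.ofReal_mul (poissonPmf_nonneg (mul_nonneg hμ (ha0 0)) y0)]
      _ = ENNReal.ofReal (poissonPmf (μ * ∑ i : Fin (k+1), a i + d) n) := by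
          rw [← ENNReal.ofReal_sum_of_nonneg (fun y0 _ =>
            mul_nonneg (poissonPmf_nonneg (mul_nonneg hμ (ha0 0)) _) (poissonPmf_nonneg hR'0 _))]
          rw [poisson_conv]
          congr 1
          rw [Fin.sum_univ_succ, hR']
          ring

lemma hasSum_poisson {μ : ℝ} : HasSum (poissonPmf μ) 1 := by
  have h := (hasSum_exp_series μ).mul_left (Real.exp (-μ))
  have : Real.exp (-μ) * Real.exp μ = 1 := by
    rw [← Real.exp_add]; simp
  rw [this] at h
  convert h using 2 with n
  · rfl
  unfold poissonPmf
  rw [mul_div_assoc]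

/-- Type A construction: `W_t ~ Po(μ)` iid, `Y_t | W_t ~ Bin(w_t, α_t)` independently,
and `X_t - ∑_{i=0}^p Y_{t-i} | Y ~ Po(μ(1 - ∑_{i=0}^p α_{t-i}))` (the residual `ε`).
Then `X_t` is marginally `Po(μ)`. -/
theorem typeA_marginal_poisson {Ω : Type*} [MeasurableSpace Ω]
    (ℙ : Measure Ω) [IsProbabilityMeasure ℙ]
    (p : ℕ) (μ : ℝ) (hμ : 0 < μ) (α : ℤ → ℝ) (t : ℤ) (ht : 1 ≤ t)
    (hα : ∀ s : ℤ, 0 ≤ α s)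
    (hsum : ∑ i ∈ Finset.range (p + 1), α (t - i) < 1)
    (W Y : ℤ → Ω → ℕ) (ε : Ω → ℕ) (X : Ω → ℕ)
    (hX : ∀ ω, X ω = (∑ i ∈ Finset.range (p + 1), Y (t - i) ω) + ε ω)
    (hjoint : ∀ (w y : ℕ → ℕ) (e : ℕ),
      ℙ {ω | (∀ i ∈ Finset.range (p + 1), W (t - i) ω = w i ∧ Y (t - i) ω = y i) ∧ ε ω = e}
        = ENNReal.ofReal
            ((∏ i ∈ Finset.range (p + 1),
                poissonPmf μ (w i) * binomPmf (w i) (α (t - i)) (y i))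
              * poissonPmf (μ * (1 - ∑ i ∈ Finset.range (p + 1), α (t - i))) e)) :
    ∀ n : ℕ, ℙ {ω | X ω = n} = ENNReal.ofReal (poissonPmf μ n) := by
  intro n
  set d : ℝ := μ * (1 - ∑ i ∈ Finset.range (p + 1), α (t - i)) with hd_def
  have hd0 : 0 ≤ d := by
    have : 0 ≤ 1 - ∑ i ∈ Finset.range (p + 1), α (t - i) := by linarith
    positivity
  set a : Fin (p + 1) → ℝ := fun i => α (t - (i : ℕ)) with ha_def
  have ha0 : ∀ i, 0 ≤ a i := fun i => hα _
  have ha1 : ∀ i, a i ≤ 1 := by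
    intro i
    have h1 : a i ≤ ∑ j ∈ Finset.range (p + 1), α (t - j) :=
      Finset.single_le_sum (f := fun j : ℕ => α (t - j)) (fun j _ => hα _)
        (Finset.mem_range.mpr i.isLt)
    linarith
  -- the partition events
  set E : ((Fin (p + 1) → ℕ × ℕ) × ℕ) → Set Ω := fun x =>
    {ω | (∀ i : Fin (p + 1), W (t - (i : ℕ)) ω = (x.1 i).1 ∧ Y (t - (i : ℕ)) ω = (x.1 i).2)
      ∧ ε ω = x.2} with hE_def
  set F : ((Fin (p + 1) → ℕ × ℕ) × ℕ) → ENNReal := fun x =>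
    ENNReal.ofReal ((∏ i, poissonPmf μ (x.1 i).1 * binomPmf (x.1 i).1 (a i) (x.1 i).2)
      * poissonPmf d x.2) with hF_def
  set cond : ((Fin (p + 1) → ℕ × ℕ) × ℕ) → ℕ := fun x => (∑ i, (x.1 i).2) + x.2 with hcond_def
  -- measure of each event
  have hPE : ∀ x, ℙ (E x) = F x := by
    intro x
    have h := hjoint (fun m => if h : m < p + 1 then (x.1 ⟨m, h⟩).1 else 0)
      (fun m => if h : m < p + 1 then (x.1 ⟨m, h⟩).2 else 0) x.2
    have hset : {ω | (∀ i ∈ Finset.range (p + 1),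
          W (t - i) ω = (if h : i < p + 1 then (x.1 ⟨i, h⟩).1 else 0)
          ∧ Y (t - i) ω = (if h : i < p + 1 then (x.1 ⟨i, h⟩).2 else 0)) ∧ ε ω = x.2} = E x := by
      ext ω
      simp only [hE_def, Set.mem_setOf_eq]
      constructor
      · rintro ⟨h1, h2⟩
        refine ⟨fun i => ?_, h2⟩
        have := h1 i (Finset.mem_range.mpr i.isLt)
        rwa [dif_pos i.isLt, dif_pos i.isLt, Fin.eta] at this
      · rintro ⟨h1, h2⟩
        refine ⟨fun i hi => ?_, h2⟩
        have hi' : i < p + 1 := Finset.mem_range.mp hi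
        rw [dif_pos hi', dif_pos hi']
        exact h1 ⟨i, hi'⟩
    have hprod : (∏ i ∈ Finset.range (p + 1),
          poissonPmf μ (if h : i < p + 1 then (x.1 ⟨i, h⟩).1 else 0)
          * binomPmf (if h : i < p + 1 then (x.1 ⟨i, h⟩).1 else 0) (α (t - i))
            (if h : i < p + 1 then (x.1 ⟨i, h⟩).2 else 0))
        = ∏ i : Fin (p + 1), poissonPmf μ (x.1 i).1 * binomPmf (x.1 i).1 (a i) (x.1 i).2 := by
      rw [Finset.prod_range fun i => poissonPmf μ (if h : i < p + 1 then (x.1 ⟨i, h⟩).1 else 0)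
          * binomPmf (if h : i < p + 1 then (x.1 ⟨i, h⟩).1 else 0) (α (t - i))
            (if h : i < p + 1 then (x.1 ⟨i, h⟩).2 else 0)]
      refine Finset.prod_congr rfl fun i _ => ?_
      rw [dif_pos i.isLt, dif_pos i.isLt, Fin.eta]
    rw [hset, hprod] at h
    exact h
  -- X is constant on each event
  have hXE : ∀ x, ∀ ω ∈ E x, X ω = cond x := by
    intro x ω hω
    obtain ⟨h1, h2⟩ := hω
    rw [hX ω, hcond_def]
    rw [h2, Finset.sum_range fun i => Y (t - i) ω]
    congr 1
    exact Finset.sum_congr rfl fun i _ => (h1 i).2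
  -- events cover Ω
  have hcover : (Set.univ : Set Ω) ⊆ ⋃ x, E x := by
    intro ω _
    exact Set.mem_iUnion.mpr ⟨((fun i => (W (t - (i : ℕ)) ω, Y (t - (i : ℕ)) ω)), ε ω),
      fun i => ⟨rfl, rfl⟩, rfl⟩
  -- rate computation
  have hrate : μ * (∑ i : Fin (p + 1), a i) + d = μ := by
    have hS : ∑ i : Fin (p + 1), a i = ∑ j ∈ Finset.range (p + 1), α (t - j) :=
      (Finset.sum_range fun j => α (t - j)).symm
    rw [hS, hd_def]; ring
  have hkey : ∀ m : ℕ, (∑' x : (Fin (p + 1) → ℕ × ℕ) × ℕ,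
      (if cond x = m then F x else 0)) = ENNReal.ofReal (poissonPmf μ m) := by
    intro m
    have h := key_conv μ d hμ.le hd0 (p + 1) a ha0 ha1 m
    rw [hrate] at h
    rw [← h]
  -- total mass one
  have htot : (∑' x : (Fin (p + 1) → ℕ × ℕ) × ℕ, F x) = 1 := by
    have h1 : ∀ x : (Fin (p + 1) → ℕ × ℕ) × ℕ,
        (∑' m : ℕ, if cond x = m then F x else 0) = F x := fun x =>
      (tsum_eq_single (cond x) fun m hm => if_neg fun h => hm h.symm).trans (if_pos rfl)
    calc (∑' x : (Fin (p + 1) → ℕ × ℕ) × ℕ, F x)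
        = ∑' (x : (Fin (p + 1) → ℕ × ℕ) × ℕ) (m : ℕ), (if cond x = m then F x else 0) :=
          tsum_congr fun x => (h1 x).symm
      _ = ∑' (m : ℕ) (x : (Fin (p + 1) → ℕ × ℕ) × ℕ), (if cond x = m then F x else 0) :=
          ENNReal.tsum_comm
      _ = ∑' m : ℕ, ENNReal.ofReal (poissonPmf μ m) := tsum_congr hkey
      _ = 1 := by
          rw [← ENNReal.ofReal_tsum_of_nonneg (fun m => poissonPmf_nonneg hμ.le m)
            hasSum_poisson.summable, hasSum_poisson.tsum_eq, ENNReal.ofReal_one]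
  set C : Set Ω := {ω | X ω = n} with hC_def
  -- upper bound
  have hub : ℙ C ≤ ENNReal.ofReal (poissonPmf μ n) := by
    rw [← hkey n]
    calc ℙ C ≤ ℙ (⋃ x, C ∩ E x) := measure_mono (by
          intro ω hω
          rcases Set.mem_iUnion.mp (hcover (Set.mem_univ ω)) with ⟨x, hx⟩
          exact Set.mem_iUnion.mpr ⟨x, hω, hx⟩)
      _ ≤ ∑' x, ℙ (C ∩ E x) := measure_iUnion_le _
      _ ≤ ∑' x, (if cond x = n then F x else 0) := by
          refine ENNReal.tsum_le_tsum fun x => ?_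
          by_cases hc : cond x = n
          · rw [if_pos hc, ← hPE x]
            exact measure_mono Set.inter_subset_right
          · rw [if_neg hc]
            have hemp : C ∩ E x = ∅ := by
              ext ω
              simp only [Set.mem_inter_iff, Set.mem_empty_iff_false, iff_false]
              rintro ⟨hXn, hEx⟩
              exact hc ((hXE x ω hEx).symm.trans hXn)
            rw [hemp, measure_empty]
  -- complement bound
  have hcomp : ℙ Cᶜ ≤ ∑' x, (if cond x = n then 0 else F x) := by
    calc ℙ Cᶜ ≤ ℙ (⋃ x, Cᶜ ∩ E x) := measure_mono (by
          intro ω hω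
          rcases Set.mem_iUnion.mp (hcover (Set.mem_univ ω)) with ⟨x, hx⟩
          exact Set.mem_iUnion.mpr ⟨x, hω, hx⟩)
      _ ≤ ∑' x, ℙ (Cᶜ ∩ E x) := measure_iUnion_le _
      _ ≤ ∑' x, (if cond x = n then 0 else F x) := by
          refine ENNReal.tsum_le_tsum fun x => ?_
          by_cases hc : cond x = n
          · rw [if_pos hc]
            have hemp : Cᶜ ∩ E x = ∅ := by
              ext ω
              simp only [Set.mem_inter_iff, Set.mem_empty_iff_false, iff_false]
              rintro ⟨hXn, hEx⟩
              exact hXn ((hXE x ω hEx).trans hc)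
            rw [hemp, measure_empty]
          · rw [if_neg hc, ← hPE x]
            exact measure_mono Set.inter_subset_right
  have hQtot : (∑' x, (if cond x = n then F x else 0)) + (∑' x, (if cond x = n then 0 else F x))
      = 1 := by
    rw [← ENNReal.tsum_add]
    rw [tsum_congr (f := fun x => (if cond x = n then F x else 0) + (if cond x = n then 0 else F x))
      (g := F) (fun x => by by_cases hc : cond x = n <;> simp [hc])]
    exact htot
  have hQle : (∑' x, (if cond x = n then 0 else F x)) ≤ 1 := by
    rw [← hQtot]; exact le_add_self
  have hQne : (∑' x, (if cond x = n then 0 else F x)) ≠ ⊤ :=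
    (hQle.trans_lt ENNReal.one_lt_top).ne
  have hone : (1 : ENNReal) ≤ ℙ C + ℙ Cᶜ := by
    have h := measure_union_le (μ := ℙ) C Cᶜ
    rwa [Set.union_compl_self, measure_univ] at h
  refine le_antisymm hub ?_
  have hchain : ENNReal.ofReal (poissonPmf μ n) + (∑' x, (if cond x = n then 0 else F x))
      ≤ ℙ C + (∑' x, (if cond x = n then 0 else F x)) := by
    calc ENNReal.ofReal (poissonPmf μ n) + (∑' x, (if cond x = n then 0 else F x))
        = 1 := by rw [← hkey n]; exact hQtot
      _ ≤ ℙ C + ℙ Cᶜ := hone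
      _ ≤ ℙ C + (∑' x, (if cond x = n then 0 else F x)) := add_le_add_right hcomp _
  exact (WithTop.add_le_add_iff_right hQne).mp hchain
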